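/- Let σ ∈ S_{2n} be a permutation satisfying σ(i*) = σ(i)* for all i, where i* := 2n+1-i. Then σ is even if and only if the number of indices i ∈ {1,...,n} with σ(i) > n is even. -/

import Mathlib

/-- `rev n i = i*` where `i* = 2n+1-i` in 1-based indexing, here 0-based. -/
def rev (n : ℕ) (i : Fin (2 * n)) : Fin (2 * n) :=
  ⟨2 * n - 1 - i.val, by have := i.isLt; omega⟩

lemma rev_val (n : ℕ) (i : Fin (2 * n)) : (rev n i).val = 2 * n - 1 - i.val := rfl

lemma rev_rev (n : ℕ) (i : Fin (2 * n)) : rev n (rev n i) = i := by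
  have := i.isLt
  apply Fin.ext
  simp only [rev_val]
  omega

lemma swaps_commute (n : ℕ) {i j : Fin (2 * n)} (hi : i.val < n) (hj : j.val < n)
    (hij : i ≠ j) :
    Commute (Equiv.swap i (rev n i)) (Equiv.swap j (rev n j)) := by
  have hi2 := i.isLt
  have hj2 := j.isLt
  have hij' : i.val ≠ j.val := fun hc => hij (Fin.ext hc)
  apply Equiv.Perm.Disjoint.commute
  intro x
  by_cases hx : x = i ∨ x = rev n i
  · right
    rcases hx with hx | hx <;> subst hx <;>
      apply Equiv.swap_apply_of_ne_of_ne <;>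
      · intro h
        have hvv := congrArg Fin.val h
        try simp only [rev_val] at hvv
        omega
  · left
    push_neg at hx
    exact Equiv.swap_apply_of_ne_of_ne hx.1 hx.2

lemma noncommProd_swap_apply (n : ℕ) (s : Finset (Fin (2 * n))) :
    ∀ (_ : ∀ i ∈ s, i.val < n)
      (comm : (↑s : Set (Fin (2 * n))).Pairwise
        (Function.onFun Commute fun i => Equiv.swap i (rev n i)))
      (x : Fin (2 * n)),
    s.noncommProd (fun i => Equiv.swap i (rev n i)) comm x =
      if x ∈ s ∨ rev n x ∈ s then rev n x else x := by
  induction s using Finset.cons_induction with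
  | empty => intro _ _ x; simp
  | cons a s ha ih =>
    intro hs comm x
    have ha2 := a.isLt
    have hx2 := x.isLt
    have han : a.val < n := hs a (Finset.mem_cons_self a s)
    rw [Finset.noncommProd_cons, Equiv.Perm.mul_apply,
      ih (fun i hi => hs i (Finset.mem_cons_of_mem hi)) _ x]
    by_cases h1 : x ∈ s ∨ rev n x ∈ s
    · rw [if_pos h1]
      have hne1 : rev n x ≠ a := by
        rcases h1 with h | h
        · have := hs x (Finset.mem_cons_of_mem h)
          intro hc; apply_fun Fin.val at hc; simp only [rev_val] at hc; omega
        · intro hc; rw [hc] at h; exact ha h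
      have hne2 : rev n x ≠ rev n a := by
        intro hc
        have : x = a := by
          have := congrArg (rev n) hc; rwa [rev_rev, rev_rev] at this
        subst this
        rcases h1 with h | h
        · exact ha h
        · have := hs _ (Finset.mem_cons_of_mem h); simp only [rev_val] at this; omega
      rw [Equiv.swap_apply_of_ne_of_ne hne1 hne2]
      have : x ∈ Finset.cons a s ha ∨ rev n x ∈ Finset.cons a s ha := by
        rcases h1 with h | h
        · exact Or.inl (Finset.mem_cons_of_mem h)
        · exact Or.inr (Finset.mem_cons_of_mem h)
      rw [if_pos this]
    · rw [if_neg h1]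
      push_neg at h1
      by_cases hxa : x = a
      · subst hxa
        rw [Equiv.swap_apply_left, if_pos (Or.inl (Finset.mem_cons_self x s))]
      · by_cases hxra : x = rev n a
        · subst hxra
          rw [Equiv.swap_apply_right]
          have : rev n (rev n a) ∈ Finset.cons a s ha := by
            rw [rev_rev]; exact Finset.mem_cons_self a s
          rw [if_pos (Or.inr this), rev_rev]
        · rw [Equiv.swap_apply_of_ne_of_ne hxa hxra]
          have hra : rev n x ≠ a := by
            intro hc
            have := congrArg (rev n) hc
            rw [rev_rev] at this
            exact hxra this
          have : ¬(x ∈ Finset.cons a s ha ∨ rev n x ∈ Finset.cons a s ha) := by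
            push_neg
            constructor
            · rw [Finset.mem_cons]; push_neg; exact ⟨hxa, h1.1⟩
            · rw [Finset.mem_cons]; push_neg; exact ⟨hra, h1.2⟩
          rw [if_neg this]

/-- a permutation σ ∈ S_{2n} with σ(i*) = σ(i)* for all i is even
iff the number of i ∈ {1,...,n} with σ(i) > n is even. -/
theorem stmt1 (n : ℕ) (hn : 2 ≤ n) (σ : Equiv.Perm (Fin (2 * n)))
    (hσ : ∀ i, σ (rev n i) = rev n (σ i)) :
    Equiv.Perm.sign σ = 1 ↔
      Even ((Finset.univ.filter
        (fun i : Fin (2 * n) => i.val < n ∧ n ≤ (σ i).val)).card) := by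
  classical
  set A := Finset.univ.filter
    (fun i : Fin (2 * n) => i.val < n ∧ n ≤ (σ i).val) with hA
  have hmem : ∀ x : Fin (2 * n), x ∈ A ↔ (x.val < n ∧ n ≤ (σ x).val) := by
    intro x; simp [hA]
  have hAlt : ∀ i ∈ A, i.val < n := fun i hi => ((hmem i).1 hi).1
  have comm : (↑A : Set (Fin (2 * n))).Pairwise
      (Function.onFun Commute fun i => Equiv.swap i (rev n i)) := by
    intro i hi j hj hij
    exact swaps_commute n (hAlt i hi) (hAlt j hj) hij
  set f := A.noncommProd (fun i => Equiv.swap i (rev n i)) comm with hf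
  have hfapp : ∀ x, f x = if x ∈ A ∨ rev n x ∈ A then rev n x else x :=
    noncommProd_swap_apply n A hAlt comm
  -- sign of f
  have hsf : Equiv.Perm.sign f = (-1 : ℤˣ) ^ A.card := by
    rw [hf, Finset.map_noncommProd, Finset.noncommProd_eq_prod]
    rw [Finset.prod_congr rfl (fun i hi => ?_), Finset.prod_const]
    have hi2 := i.isLt
    have : i ≠ rev n i := by
      have := hAlt i hi
      intro hc; apply_fun Fin.val at hc; simp only [rev_val] at hc; omega
    exact Equiv.Perm.sign_swap this
  set τ := σ * f with hτ
  have hτapp : ∀ x, τ x = σ (f x) := fun x => rfl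
  have hrevA : ∀ x : Fin (2 * n), x.val < n → rev n x ∉ A := by
    intro x hx hc
    have := hAlt _ hc
    have hx2 := x.isLt
    simp only [rev_val] at this
    omega
  have hτlt : ∀ x : Fin (2 * n), x.val < n → (τ x).val < n := by
    intro x hx
    rw [hτapp, hfapp]
    by_cases hxA : x ∈ A
    · rw [if_pos (Or.inl hxA), hσ]
      have h1 : n ≤ (σ x).val := ((hmem x).1 hxA).2
      have h2 := (σ x).isLt
      simp only [rev_val]
      omega
    · rw [if_neg (by push_neg; exact ⟨hxA, hrevA x hx⟩)]
      by_contra hc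
      exact hxA ((hmem x).2 ⟨hx, by omega⟩)
  have hτge : ∀ x : Fin (2 * n), n ≤ x.val → n ≤ (τ x).val := by
    intro x hx
    have hx2 := x.isLt
    have hxA : x ∉ A := fun hc => by have := ((hmem x).1 hc).1; omega
    have hrx : (rev n x).val < n := by simp only [rev_val]; omega
    rw [hτapp, hfapp]
    by_cases hrA : rev n x ∈ A
    · rw [if_pos (Or.inr hrA)]
      exact ((hmem _).1 hrA).2
    · rw [if_neg (by push_neg; exact ⟨hxA, hrA⟩)]
      have h1 : (σ (rev n x)).val < n := by
        by_contra hc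
        exact hrA ((hmem _).2 ⟨hrx, by omega⟩)
      have h2 : σ x = rev n (σ (rev n x)) := by
        conv_lhs => rw [← rev_rev n x, hσ]
      rw [h2]
      simp only [rev_val]
      have := (σ (rev n x)).isLt
      omega
  have hp : ∀ x : Fin (2 * n), x.val < n ↔ (τ x).val < n := by
    intro x
    constructor
    · exact hτlt x
    · intro h
      by_contra hc
      have := hτge x (by omega)
      omega
  have hq : ∀ x : Fin (2 * n), ¬x.val < n ↔ ¬(τ x).val < n := by
    intro x; rw [hp]
  set g := Equiv.Perm.ofSubtype (τ.subtypePerm (p := fun x : Fin (2 * n) => x.val < n) (fun x => (hp x).symm)) with hg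
  set h := Equiv.Perm.ofSubtype (τ.subtypePerm (p := fun x : Fin (2 * n) => ¬x.val < n) (fun x => (hq x).symm)) with hh
  -- the reversal permutation
  have hinv : Function.Involutive (rev n) := rev_rev n
  set c := hinv.toPerm with hc
  have hcapp : ∀ x, c x = rev n x := fun x => rfl
  have hτc : ∀ x, τ (rev n x) = rev n (τ x) := by
    intro x
    rw [hτapp, hτapp, hfapp, hfapp]
    by_cases h1 : x ∈ A ∨ rev n x ∈ A
    · have : rev n x ∈ A ∨ rev n (rev n x) ∈ A := by
        rw [rev_rev]; exact h1.symm
      rw [if_pos this, if_pos h1, rev_rev, ← hσ, rev_rev]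
    · have : ¬(rev n x ∈ A ∨ rev n (rev n x) ∈ A) := by
        rw [rev_rev]; exact fun hc => h1 hc.symm
      rw [if_neg this, if_neg h1, hσ]
  have hgmem : ∀ (x : Fin (2 * n)), x.val < n → g x = τ x := by
    intro x hx
    rw [hg, Equiv.Perm.ofSubtype_apply_of_mem (τ.subtypePerm (p := fun x : Fin (2 * n) => x.val < n) (fun x => (hp x).symm)) hx]
    rfl
  have hgnot : ∀ (x : Fin (2 * n)), ¬x.val < n → g x = x := by
    intro x hx
    rw [hg]
    exact Equiv.Perm.ofSubtype_apply_of_not_mem (τ.subtypePerm (p := fun x : Fin (2 * n) => x.val < n) (fun x => (hp x).symm)) hx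
  have hhmem : ∀ (x : Fin (2 * n)), ¬x.val < n → h x = τ x := by
    intro x hx
    rw [hh, Equiv.Perm.ofSubtype_apply_of_mem (τ.subtypePerm (p := fun x : Fin (2 * n) => ¬x.val < n) (fun x => (hq x).symm)) hx]
    rfl
  have hhnot : ∀ (x : Fin (2 * n)), x.val < n → h x = x := by
    intro x hx
    rw [hh]
    exact Equiv.Perm.ofSubtype_apply_of_not_mem (τ.subtypePerm (p := fun x : Fin (2 * n) => ¬x.val < n) (fun x => (hq x).symm)) (not_not_intro hx)
  have hτgh : τ = g * h := by
    apply Equiv.ext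
    intro x
    show τ x = g (h x)
    by_cases hx : x.val < n
    · rw [hhnot x hx, hgmem x hx]
    · rw [hhmem x hx]
      have hτx : ¬(τ x).val < n := (hq x).1 hx
      rw [hgnot _ hτx]
  have hhcgc : h = c * g * c := by
    apply Equiv.ext
    intro x
    have hx2 := x.isLt
    show h x = c (g (c x))
    simp only [hcapp]
    by_cases hx : x.val < n
    · have hrx : ¬(rev n x).val < n := by simp only [rev_val]; omega
      rw [hhnot x hx, hgnot _ hrx, rev_rev]
    · have hrx : (rev n x).val < n := by simp only [rev_val]; omega
      rw [hhmem x hx, hgmem _ hrx, hτc, rev_rev]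
  have hsτ : Equiv.Perm.sign τ = 1 := by
    rw [hτgh, map_mul, hhcgc, map_mul, map_mul]
    rcases Int.units_eq_one_or (Equiv.Perm.sign g) with hu | hu <;>
      rcases Int.units_eq_one_or (Equiv.Perm.sign c) with hv | hv <;>
      rw [hu, hv] <;> decide
  have hsσ : Equiv.Perm.sign σ = (-1 : ℤˣ) ^ A.card := by
    have : σ = τ * f⁻¹ := by rw [hτ]; group
    rw [this, map_mul, map_inv, hsτ, hsf, one_mul, ← inv_pow]
    norm_num
  rw [hsσ]
  exact neg_one_pow_eq_one_iff_even (by decide)
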